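/- arXiv:1504.01357 — 2 statements merged into one kernel-verified Lean document; each statement's English description precedes it below -/
import Mathlib

section
/- Let α > 0 and φ ∈ ω_{α,loc}. Then q_φ is a norm on the space c_{0,0} of finitely supported complex sequences, and there exists a constant C_φ > 0, independent of f and g, such that q_φ(f*g) ≤ C_φ · q_φ(f) · q_φ(g) for all f, g ∈ c_{0,0}. -/
/-- The Cesàro kernel `k^α(n) = Γ(n+α)/(Γ(α)·Γ(n+1))`. -/
noncomputable def cesK (α : ℝ) (n : ℕ) : ℝ :=
  Real.Gamma ((n : ℝ) + α) / (Real.Gamma α * Real.Gamma ((n : ℝ) + 1))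

/-- `φ` belongs to the class `ω_{α,loc}` with constant `c`. -/
def omegaLoc (α : ℝ) (φ : ℕ → ℝ) (c : ℝ) : Prop :=
  ∀ j p : ℕ, 1 ≤ j → j ≤ p →
    ((∑ n ∈ Finset.range (j + 1), cesK α n * φ (j + p - n)) +
        ∑ n ∈ Finset.Icc (p + 1) (j + p), cesK α n * φ (j + p - n)) ≤ c * (φ j * φ p)

/-- The Weyl sum of order `α`: `W^{-α}f(n) = ∑_{j=n}^∞ k^α(j-n)·f(j)`. -/
noncomputable def weylSum (α : ℝ) (f : ℕ → ℂ) : ℕ → ℂ :=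
  fun n => ∑ᶠ j : ℕ, (cesK α j : ℂ) * f (j + n)

/-- The forward difference operator `Δh(n) = h(n+1) - h(n)`. -/
def fdiff (f : ℕ → ℂ) : ℕ → ℂ := fun n => f (n + 1) - f n

/-- The Weyl difference of order `α > 0`:
`W^α f(n) = (-1)^m Δ^m W^{-(m-α)} f(n)` with `m = [α]+1`; and `W^0 f = f`. -/
noncomputable def weylDiff (α : ℝ) (f : ℕ → ℂ) : ℕ → ℂ :=
  if α = 0 then f
  else fun n => (-1 : ℂ) ^ (⌊α⌋₊ + 1) * fdiff^[⌊α⌋₊ + 1] (weylSum ((⌊α⌋₊ : ℝ) + 1 - α) f) n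

/-- Convolution of sequences: `(f*g)(n) = ∑_{j=0}^n f(n-j)·g(j)`. -/
noncomputable def conv (f g : ℕ → ℂ) (n : ℕ) : ℂ :=
  ∑ j ∈ Finset.range (n + 1), f (n - j) * g j

/-- `q_φ(f) = ∑_{n=0}^∞ φ(n)·|W^α f(n)|`, a finite sum for finitely supported `f`. -/
noncomputable def qNorm (α : ℝ) (φ : ℕ → ℝ) (f : ℕ → ℂ) : ℝ :=
  ∑ᶠ n : ℕ, φ n * ‖weylDiff α f n‖

/-- Coefficients of `(1-z)^{-γ}`. -/
noncomputable def genC (γ : ℝ) : ℕ → ℝ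
  | 0 => 1
  | n+1 => genC γ n * ((n : ℝ) + γ) / ((n : ℝ) + 1)

lemma genC_zero (γ : ℝ) : genC γ 0 = 1 := rfl
lemma genC_succ (γ : ℝ) (n : ℕ) : genC γ (n+1) = genC γ n * ((n : ℝ) + γ) / ((n : ℝ) + 1) := rfl

lemma genC_pos {γ : ℝ} (hγ : 0 < γ) (n : ℕ) : 0 < genC γ n := by
  induction n with
  | zero => norm_num [genC_zero]
  | succ n ih =>
    rw [genC_succ]
    have h1 : (0:ℝ) < (n:ℝ) + γ := by positivity
    have h2 : (0:ℝ) < (n:ℝ) + 1 := by positivity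
    positivity

lemma cesK_eq_genC {γ : ℝ} (hγ : 0 < γ) : cesK γ = genC γ := by
  funext n
  induction n with
  | zero =>
    simp [cesK, genC_zero, Real.Gamma_one, (Real.Gamma_pos_of_pos hγ).ne']
  | succ n ih =>
    have hg : Real.Gamma γ ≠ 0 := (Real.Gamma_pos_of_pos hγ).ne'
    have hn1 : Real.Gamma ((n:ℝ) + 1) ≠ 0 := by
      have : (0:ℝ) < (n:ℝ) + 1 := by positivity
      exact (Real.Gamma_pos_of_pos this).ne'
    have e1 : ((n+1 : ℕ) : ℝ) + γ = ((n:ℝ) + γ) + 1 := by push_cast; ring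
    have e2 : ((n+1 : ℕ) : ℝ) + 1 = ((n:ℝ) + 1) + 1 := by push_cast; ring
    rw [genC_succ, ← ih, cesK, cesK, e1, e2, Real.Gamma_add_one (by positivity),
      Real.Gamma_add_one (by positivity)]
    field_simp

lemma genC_zero_order : ∀ n, 1 ≤ n → genC 0 n = 0 := by
  intro n hn
  induction n with
  | zero => omega
  | succ n ih =>
    rcases Nat.eq_or_lt_of_le hn with h | h
    · have : n = 0 := by omega
      subst this; norm_num [genC_succ, genC_zero]
    · rw [genC_succ, ih (by omega)]; ring

lemma genC_neg_one : ∀ n, 2 ≤ n → genC (-1) n = 0 := by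
  intro n hn
  induction n with
  | zero => omega
  | succ n ih =>
    rcases Nat.lt_or_ge n 2 with h | h
    · interval_cases n
      · omega
      · norm_num [genC_succ]
    · rw [genC_succ, ih h]; ring

lemma genC_neg_one_one : genC (-1) 1 = -1 := by norm_num [genC_succ, genC_zero]

/-- Vandermonde: Cauchy product of genC's. -/
lemma genC_vandermonde (γ δ : ℝ) (n : ℕ) :
    ∑ l ∈ Finset.range (n+1), genC γ l * genC δ (n-l) = genC (γ+δ) n := by
  induction n with
  | zero => simp [genC_zero]
  | succ n ih =>
    have key : ((n:ℝ)+1) * ∑ l ∈ Finset.range (n+2), genC γ l * genC δ (n+1-l)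
        = ((n:ℝ) + γ + δ) * ∑ l ∈ Finset.range (n+1), genC γ l * genC δ (n-l) := by
      have expand : ∀ l ∈ Finset.range (n+2),
          ((n:ℝ)+1) * (genC γ l * genC δ (n+1-l))
          = (l:ℝ) * genC γ l * genC δ (n+1-l)
            + genC γ l * (((n+1-l : ℕ):ℝ) * genC δ (n+1-l)) := by
        intro l hl
        have : ((n+1-l : ℕ) : ℝ) = (n:ℝ) + 1 - (l:ℝ) := by
          have : l ≤ n+1 := by simp at hl; omega
          push_cast [Nat.cast_sub this]; ring
        rw [this]; ring
      rw [Finset.mul_sum, Finset.sum_congr rfl expand, Finset.sum_add_distrib]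
      have first : ∑ l ∈ Finset.range (n+2), (l:ℝ) * genC γ l * genC δ (n+1-l)
          = ∑ t ∈ Finset.range (n+1), ((t:ℝ) + γ) * genC γ t * genC δ (n-t) := by
        rw [Finset.sum_range_succ' (fun l => (l:ℝ) * genC γ l * genC δ (n+1-l)) (n+1)]
        simp only [Nat.cast_zero, zero_mul, add_zero]
        apply Finset.sum_congr rfl
        intro t ht
        have e2 : n + 1 - (t+1) = n - t := by omega
        rw [genC_succ, e2, Nat.cast_add, Nat.cast_one]
        have ht1 : ((t:ℝ)+1) ≠ 0 := by positivity
        rw [mul_comm ((t:ℝ)+1) (genC γ t * ((t:ℝ)+γ) / ((t:ℝ)+1)),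
          div_mul_cancel₀ _ ht1]
        ring
      have second : ∑ l ∈ Finset.range (n+2), genC γ l * (((n+1-l : ℕ):ℝ) * genC δ (n+1-l))
          = ∑ l ∈ Finset.range (n+1), genC γ l * (((n-l:ℕ):ℝ) + δ) * genC δ (n-l) := by
        rw [Finset.sum_range_succ]
        simp only [Nat.sub_self, Nat.cast_zero, zero_mul, mul_zero, add_zero]
        apply Finset.sum_congr rfl
        intro l hl
        have hl' : l ≤ n := by simp at hl; omega
        have e : n + 1 - l = (n - l) + 1 := by omega
        rw [e, genC_succ, Nat.cast_add, Nat.cast_one]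
        have hx : ((n-l:ℕ):ℝ) + 1 ≠ 0 := by positivity
        rw [mul_comm (((n-l:ℕ):ℝ)+1) (genC δ (n-l) * (((n-l:ℕ):ℝ)+δ) / (((n-l:ℕ):ℝ)+1)),
          div_mul_cancel₀ _ hx]
        ring
      rw [first, second, ← Finset.sum_add_distrib, Finset.mul_sum]
      apply Finset.sum_congr rfl
      intro l hl
      have hl' : l ≤ n := by simp at hl; omega
      push_cast [Nat.cast_sub hl']
      ring
    have hne : ((n:ℝ)+1) ≠ 0 := by positivity
    have : ∑ l ∈ Finset.range (n+2), genC γ l * genC δ (n+1-l)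
        = ((n:ℝ) + γ + δ) / ((n:ℝ)+1) * ∑ l ∈ Finset.range (n+1), genC γ l * genC δ (n-l) := by
      field_simp
      linarith [key]
    rw [this, ih, genC_succ]
    ring

noncomputable def T (σ : ℕ → ℝ) (f : ℕ → ℂ) : ℕ → ℂ := fun n => ∑ᶠ t : ℕ, (σ t : ℂ) * f (t + n)

lemma T_eq_sum (σ : ℕ → ℝ) {f : ℕ → ℂ} {N : ℕ} (hf : ∀ i, N ≤ i → f i = 0) (n : ℕ) :
    T σ f n = ∑ t ∈ Finset.range N, (σ t : ℂ) * f (t + n) := by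
  apply finsum_eq_sum_of_support_subset
  intro t ht
  simp only [Function.mem_support] at ht
  simp only [Finset.coe_range, Set.mem_Iio]
  by_contra hc
  push_neg at hc
  exact ht (by rw [hf (t+n) (by omega), mul_zero])

lemma T_bound (σ : ℕ → ℝ) {f : ℕ → ℂ} {N : ℕ} (hf : ∀ i, N ≤ i → f i = 0) :
    ∀ i, N ≤ i → T σ f i = 0 := by
  intro i hi
  rw [T_eq_sum σ hf]
  apply Finset.sum_eq_zero
  intro t _
  rw [hf (t+i) (by omega), mul_zero]

lemma T_comp (σ τ : ℕ → ℝ) {f : ℕ → ℂ} {N : ℕ} (hf : ∀ i, N ≤ i → f i = 0) (n : ℕ) :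
    T σ (T τ f) n = T (fun i => ∑ l ∈ Finset.range (i+1), σ l * τ (i-l)) f n := by
  rw [T_eq_sum σ (T_bound τ hf), T_eq_sum _ hf]
  have lhs : ∑ t ∈ Finset.range N, (σ t : ℂ) * T τ f (t+n)
      = ∑ q ∈ (Finset.range N ×ˢ Finset.range N).filter (fun q => q.1 + q.2 < N),
          (σ q.1 : ℂ) * (τ q.2 : ℂ) * f (q.1 + q.2 + n) := by
    have : ∀ t ∈ Finset.range N, (σ t : ℂ) * T τ f (t+n)
        = ∑ s ∈ Finset.range N, (σ t : ℂ) * (τ s : ℂ) * f (t + s + n) := by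
      intro t _
      rw [T_eq_sum τ hf, Finset.mul_sum]
      apply Finset.sum_congr rfl
      intro s _
      rw [show s + (t + n) = t + s + n by omega]
      ring
    rw [Finset.sum_congr rfl this, ← Finset.sum_product']
    rw [Finset.sum_filter_of_ne]
    intro q hq hne
    by_contra hc
    push_neg at hc
    exact hne (by rw [hf (q.1+q.2+n) (by omega), mul_zero])
  rw [lhs]
  have rhs : ∑ i ∈ Finset.range N,
        ((∑ l ∈ Finset.range (i+1), σ l * τ (i-l) : ℝ) : ℂ) * f (i + n)
      = ∑ x ∈ (Finset.range N).sigma (fun i => Finset.range (i+1)),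
          (σ x.2 : ℂ) * (τ (x.1 - x.2) : ℂ) * f (x.1 + n) := by
    rw [Finset.sum_sigma]
    apply Finset.sum_congr rfl
    intro i _
    push_cast
    rw [Finset.sum_mul]
  rw [rhs]
  apply Finset.sum_nbij' (i := fun q => (⟨q.1 + q.2, q.1⟩ : (_ : ℕ) × ℕ))
    (j := fun x => (x.2, x.1 - x.2))
  · intro q hq
    simp only [Finset.mem_filter, Finset.mem_product, Finset.mem_range] at hq
    simp only [Finset.mem_sigma, Finset.mem_range]
    omega
  · intro x hx
    simp only [Finset.mem_sigma, Finset.mem_range] at hx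
    simp only [Finset.mem_filter, Finset.mem_product, Finset.mem_range]
    omega
  · intro q hq; simp
  · intro x hx
    simp only [Finset.mem_sigma, Finset.mem_range] at hx
    obtain ⟨a, b⟩ := x
    simp only at hx ⊢
    have : b + (a - b) = a := by omega
    rw [this]
  · intro q hq
    simp only [Finset.mem_filter, Finset.mem_product, Finset.mem_range] at hq
    have : q.1 + q.2 - q.1 = q.2 := by omega
    rw [this]

lemma T_congr (σ σ' : ℕ → ℝ) (hσ : ∀ t, σ t = σ' t) (f : ℕ → ℂ) (n : ℕ) : T σ f n = T σ' f n := by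
  unfold T
  exact finsum_congr fun t => by rw [hσ]

lemma T_genC_comp (γ δ : ℝ) {f : ℕ → ℂ} {N : ℕ} (hf : ∀ i, N ≤ i → f i = 0) (n : ℕ) :
    T (genC γ) (T (genC δ) f) n = T (genC (γ+δ)) f n := by
  rw [T_comp _ _ hf]
  exact T_congr _ _ (fun t => genC_vandermonde γ δ t) f n

lemma T_genC_zero (f : ℕ → ℂ) (n : ℕ) : T (genC 0) f n = f n := by
  unfold T
  rw [finsum_eq_single _ 0 ?_]
  · show ((genC 0 0 : ℝ) : ℂ) * f (0 + n) = f n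
    norm_num [genC]
  · intro x hx
    rw [genC_zero_order x (by omega)]
    norm_num

lemma T_neg_one (h : ℕ → ℂ) (n : ℕ) : T (genC (-1)) h n = h n - h (n+1) := by
  unfold T
  rw [finsum_eq_sum_of_support_subset _ (s := ({0, 1} : Finset ℕ)) ?_]
  · rw [Finset.sum_pair (by omega)]
    have h0 : genC (-1) 0 = 1 := rfl
    have h1 : genC (-1) 1 = -1 := by norm_num [genC]
    rw [h0, h1]
    push_cast
    rw [show 1 + n = n + 1 by omega, show 0 + n = n by omega]
    ring
  · intro t ht
    simp only [Function.mem_support] at ht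
    simp only [Finset.coe_insert, Finset.coe_singleton, Set.mem_insert_iff, Set.mem_singleton_iff]
    by_contra hc
    push_neg at hc
    rw [genC_neg_one t (by omega)] at ht
    norm_num at ht

lemma T_neg (σ : ℕ → ℝ) (f : ℕ → ℂ) (n : ℕ) : T σ (fun i => -f i) n = -T σ f n := by
  unfold T
  simp only [mul_neg]
  exact finsum_neg_distrib _

lemma iter_repr (q : ℕ) : ∀ (δ : ℝ) (f : ℕ → ℂ) (N : ℕ), (∀ i, N ≤ i → f i = 0) → ∀ n : ℕ,
    fdiff^[q] (T (genC δ) f) n = (-1 : ℂ)^q * T (genC (δ - q)) f n := by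
  induction q with
  | zero => intro δ f N hf n; simp
  | succ q ih =>
    intro δ f N hf n
    have step : fdiff (T (genC δ) f) = T (genC (δ - 1)) (fun i => -f i) := by
      funext m
      have : fdiff (T (genC δ) f) m = -(T (genC (-1)) (T (genC δ) f) m) := by
        rw [T_neg_one]
        unfold fdiff
        ring
      rw [this, T_genC_comp (-1) δ hf, T_neg]
      rw [show (-1 : ℝ) + δ = δ - 1 by ring]
    rw [Function.iterate_succ_apply, step,
      ih (δ-1) (fun i => -f i) N (fun i hi => by show -f i = 0; rw [hf i hi]; ring) n, T_neg]
    rw [show δ - 1 - (q:ℝ) = δ - ((q:ℕ)+1 : ℕ) by push_cast; ring]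
    ring

lemma weylDiff_eq_T {α : ℝ} (hα : 0 < α) {f : ℕ → ℂ} {N : ℕ}
    (hf : ∀ i, N ≤ i → f i = 0) (n : ℕ) :
    weylDiff α f n = T (genC (-α)) f n := by
  have hβ : 0 < (⌊α⌋₊ : ℝ) + 1 - α := by
    have := Nat.lt_floor_add_one α
    linarith
  have hws : weylSum ((⌊α⌋₊ : ℝ) + 1 - α) f = T (genC ((⌊α⌋₊ : ℝ) + 1 - α)) f := by
    show T (cesK _) f = _
    rw [cesK_eq_genC hβ]
  rw [weylDiff, if_neg hα.ne', hws, iter_repr (⌊α⌋₊ + 1) _ f N hf n]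
  rw [show (⌊α⌋₊ : ℝ) + 1 - α - ((⌊α⌋₊ + 1 : ℕ) : ℝ) = -α by push_cast; ring]
  rw [← mul_assoc, ← mul_pow]
  norm_num

lemma T_inv {α : ℝ} {f : ℕ → ℂ} {N : ℕ} (hf : ∀ i, N ≤ i → f i = 0) (n : ℕ) :
    T (genC α) (T (genC (-α)) f) n = f n := by
  rw [T_genC_comp α (-α) hf, show α + -α = 0 by ring, T_genC_zero]

lemma exists_bound {f : ℕ → ℂ} (hf : (Function.support f).Finite) :
    ∃ N, ∀ i, N ≤ i → f i = 0 := by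
  refine ⟨hf.toFinset.sup id + 1, fun i hi => ?_⟩
  by_contra hc
  have : i ∈ hf.toFinset := by simpa using hc
  have := Finset.le_sup (f := id) this
  simp only [id] at this
  omega

noncomputable def useq (α : ℝ) (j : ℕ) (n : ℕ) : ℝ := if n ≤ j then genC α (j - n) else 0

noncomputable def wseq (α : ℝ) (j p : ℕ) (s : ℕ) : ℝ :=
  if p ≤ s ∧ s ≤ j + p then genC α (j + p - s)
  else if s < j then -genC α (j + p - s) else 0

lemma wseq_bound (α : ℝ) (j p : ℕ) : ∀ s, j + p + 1 ≤ s → wseq α j p s = 0 := by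
  intro s hs
  unfold wseq
  rw [if_neg (by omega), if_neg (by omega)]

lemma key_identity (α : ℝ) {j p : ℕ} (hjp : j ≤ p) (n : ℕ) :
    ∑ t ∈ Finset.range (j+p+1), genC α t * wseq α j p (t+n)
      = ∑ i ∈ Finset.range (n+1), useq α j (n-i) * useq α p i := by
  rcases Nat.lt_or_ge (j+p) n with hn | hn
  · rw [Finset.sum_eq_zero, Finset.sum_eq_zero]
    · intro i hi
      simp only [Finset.mem_range] at hi
      rcases le_or_gt i p with hip | hip
      · rw [useq, useq, if_neg (show ¬ n - i ≤ j by omega), zero_mul]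
      · rw [useq, useq, if_neg (show ¬ i ≤ p by omega), mul_zero]
    · intro t _
      rw [wseq_bound α j p (t+n) (by omega), mul_zero]
  · set s0 := j + p - n with hs0
    set D : ℕ → ℝ := fun t => genC α t * genC α (s0 - t) with hD
    have lhs_eq : ∑ t ∈ Finset.range (j+p+1), genC α t * wseq α j p (t+n)
        = (∑ t ∈ Finset.Icc (p-n) s0, D t) - ∑ t ∈ Finset.range (j-n), D t := by
      have ptwise : ∀ t ∈ Finset.range (j+p+1), genC α t * wseq α j p (t+n)
          = (if p - n ≤ t ∧ t ≤ s0 then D t else 0) - (if t + n < j then D t else 0) := by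
        intro t ht
        simp only [Finset.mem_range] at ht
        unfold wseq
        by_cases h1 : p ≤ t + n ∧ t + n ≤ j + p
        · rw [if_pos h1, if_pos (show p - n ≤ t ∧ t ≤ s0 by omega),
            if_neg (show ¬ t + n < j by omega),
            show j + p - (t+n) = s0 - t by omega]
          simp only [hD, sub_zero]
        · by_cases h2 : t + n < j
          · rw [if_neg h1, if_pos h2, if_pos h2,
              if_neg (show ¬ (p - n ≤ t ∧ t ≤ s0) by
                intro hh; exact h1 ⟨by omega, by omega⟩),
              show j + p - (t+n) = s0 - t by omega]
            simp only [hD]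
            ring
          · rw [if_neg h1, if_neg h2, if_neg h2,
              if_neg (show ¬ (p - n ≤ t ∧ t ≤ s0) by
                intro hh; exact h1 ⟨by omega, by omega⟩)]
            simp
      rw [Finset.sum_congr rfl ptwise, Finset.sum_sub_distrib]
      congr 1
      · rw [← Finset.sum_filter]
        apply Finset.sum_congr _ (fun _ _ => rfl)
        ext t
        simp only [Finset.mem_filter, Finset.mem_range, Finset.mem_Icc]
        omega
      · rw [← Finset.sum_filter]
        apply Finset.sum_congr _ (fun _ _ => rfl)
        ext t
        simp only [Finset.mem_filter, Finset.mem_range]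
        omega
    have rhs_eq : ∑ i ∈ Finset.range (n+1), useq α j (n-i) * useq α p i
        = ∑ t ∈ Finset.Icc (p-n) (min p s0), D t := by
      have ptwise : ∀ i ∈ Finset.range (n+1), useq α j (n-i) * useq α p i
          = if n - i ≤ j ∧ i ≤ p then genC α (j - (n-i)) * genC α (p - i) else 0 := by
        intro i _
        unfold useq
        by_cases h1 : n - i ≤ j ∧ i ≤ p
        · rw [if_pos h1, if_pos h1.1, if_pos h1.2]
        · rw [if_neg h1]
          by_cases h2 : i ≤ p
          · rw [if_neg (fun hh => h1 ⟨hh, h2⟩), zero_mul]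
          · rw [if_neg h2, mul_zero]
      rw [Finset.sum_congr rfl ptwise, ← Finset.sum_filter]
      apply Finset.sum_nbij' (i := fun i => p - i) (j := fun t => p - t)
      · intro a ha
        simp only [Finset.mem_filter, Finset.mem_range] at ha
        simp only [Finset.mem_Icc, le_min_iff]
        omega
      · intro t ht
        simp only [Finset.mem_Icc, le_min_iff] at ht
        simp only [Finset.mem_filter, Finset.mem_range]
        omega
      · intro a ha
        simp only [Finset.mem_filter, Finset.mem_range] at ha
        omega
      · intro t ht
        simp only [Finset.mem_Icc, le_min_iff] at ht
        omega
      · intro a ha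
        simp only [Finset.mem_filter, Finset.mem_range] at ha
        rw [show j - (n - a) = s0 - (p - a) by omega, hD]
        ring
    rw [lhs_eq, rhs_eq]
    rcases le_or_gt j n with hjn | hjn
    · rw [show j - n = 0 by omega, Finset.range_zero, Finset.sum_empty, sub_zero,
        min_eq_right (show s0 ≤ p by omega)]
    · rw [min_eq_left (show p ≤ s0 by omega)]
      have split : Finset.Icc (p-n) s0 = Finset.Icc (p-n) p ∪ Finset.Icc (p+1) s0 := by
        ext t; simp only [Finset.mem_Icc, Finset.mem_union]; omega
      have hdisj : Disjoint (Finset.Icc (p-n) p) (Finset.Icc (p+1) s0) := by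
        rw [Finset.disjoint_left]
        intro a ha hb
        simp only [Finset.mem_Icc] at ha hb
        omega
      have flip : ∑ t ∈ Finset.Icc (p+1) s0, D t = ∑ t ∈ Finset.range (j-n), D t := by
        apply Finset.sum_nbij' (i := fun t => s0 - t) (j := fun r => s0 - r)
        · intro a ha
          simp only [Finset.mem_Icc] at ha
          simp only [Finset.mem_range]
          omega
        · intro r hr
          simp only [Finset.mem_range] at hr
          simp only [Finset.mem_Icc]
          omega
        · intro a ha
          simp only [Finset.mem_Icc] at ha
          omega
        · intro r hr
          simp only [Finset.mem_range] at hr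
          omega
        · intro a ha
          simp only [Finset.mem_Icc] at ha
          rw [hD]
          simp only
          rw [show s0 - (s0 - a) = a by omega]
          ring
      rw [split, Finset.sum_union hdisj, flip]
      ring

lemma T_sum {ι : Type*} (σ : ℕ → ℝ) (S : Finset ι) (H : ι → ℕ → ℂ) {N : ℕ}
    (hH : ∀ x ∈ S, ∀ i, N ≤ i → H x i = 0) (n : ℕ) :
    T σ (fun m => ∑ x ∈ S, H x m) n = ∑ x ∈ S, T σ (H x) n := by
  have hb : ∀ i, N ≤ i → (∑ x ∈ S, H x i) = 0 :=
    fun i hi => Finset.sum_eq_zero (fun x hx => hH x hx i hi)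
  rw [T_eq_sum σ hb]
  rw [Finset.sum_congr rfl (fun x hx => T_eq_sum σ (hH x hx) n), Finset.sum_comm]
  exact Finset.sum_congr rfl (fun t _ => Finset.mul_sum _ _ _)

lemma T_mul (σ : ℕ → ℝ) (a : ℂ) {f : ℕ → ℂ} {N : ℕ} (hf : ∀ i, N ≤ i → f i = 0) (n : ℕ) :
    T σ (fun m => a * f m) n = a * T σ f n := by
  rw [T_eq_sum σ (f := fun m => a * f m) (fun i hi => by show a * f i = 0; rw [hf i hi, mul_zero]),
    T_eq_sum σ hf, Finset.mul_sum]
  exact Finset.sum_congr rfl (fun t _ => by ring)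

lemma T_add (σ : ℕ → ℝ) {f g : ℕ → ℂ} {N : ℕ} (hf : ∀ i, N ≤ i → f i = 0)
    (hg : ∀ i, N ≤ i → g i = 0) (n : ℕ) :
    T σ (f + g) n = T σ f n + T σ g n := by
  rw [T_eq_sum σ (f := f + g) (fun i hi => by simp [Pi.add_apply, hf i hi, hg i hi]),
    T_eq_sum σ hf, T_eq_sum σ hg, ← Finset.sum_add_distrib]
  exact Finset.sum_congr rfl (fun t _ => by simp [Pi.add_apply]; ring)

lemma T_expand (σ : ℕ → ℝ) {F : ℕ → ℂ} {N : ℕ} (hF : ∀ i, N ≤ i → F i = 0) (n : ℕ) :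
    T σ F n = ∑ j ∈ Finset.range N, (if n ≤ j then (σ (j-n) : ℂ) else 0) * F j := by
  rw [T_eq_sum σ hF]
  have ext1 : ∑ j ∈ Finset.range N, (if n ≤ j then (σ (j-n) : ℂ) else 0) * F j
      = ∑ j ∈ Finset.range (N+n), (if n ≤ j then (σ (j-n) : ℂ) else 0) * F j := by
    apply Finset.sum_subset (Finset.range_subset_range.2 (by omega))
    intro x _ hx
    simp only [Finset.mem_range, not_lt] at hx
    rw [hF x (by omega), mul_zero]
  have ext2 : ∑ j ∈ Finset.range (N+n), (if n ≤ j then (σ (j-n) : ℂ) else 0) * F j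
      = ∑ j ∈ Finset.Ico n (N+n), (σ (j-n) : ℂ) * F j := by
    rw [eq_comm]
    apply Finset.sum_subset_zero_on_sdiff
    · intro x hx
      simp only [Finset.mem_Ico] at hx
      simp only [Finset.mem_range]
      omega
    · intro x hx
      simp only [Finset.mem_sdiff, Finset.mem_range, Finset.mem_Ico] at hx
      rw [if_neg (by omega), zero_mul]
    · intro x hx
      simp only [Finset.mem_Ico] at hx
      rw [if_pos (by omega)]
  rw [ext1, ext2, Finset.sum_Ico_eq_sum_range]
  rw [show N + n - n = N by omega]
  apply Finset.sum_congr rfl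
  intro t _
  rw [show n + t - n = t by omega, show n + t = t + n by omega]

lemma conv_comm (f g : ℕ → ℂ) (n : ℕ) : conv f g n = conv g f n := by
  unfold conv
  rw [← Finset.sum_range_reflect]
  apply Finset.sum_congr rfl
  intro i hi
  simp only [Finset.mem_range] at hi
  rw [show n + 1 - 1 - i = n - i by omega, show n - (n - i) = i by omega, mul_comm]

lemma conv_bound {f g : ℕ → ℂ} {N M : ℕ} (hf : ∀ i, N ≤ i → f i = 0)
    (hg : ∀ i, M ≤ i → g i = 0) : ∀ n, N + M ≤ n → conv f g n = 0 := by
  intro n hn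
  apply Finset.sum_eq_zero
  intro i hi
  simp only [Finset.mem_range] at hi
  rcases le_or_gt M i with him | him
  · rw [hg i him, mul_zero]
  · rw [hf (n-i) (by omega), zero_mul]

lemma conv_expand {f g : ℕ → ℂ} {N M : ℕ} (F G : ℕ → ℂ) (a b : ℕ → ℕ → ℂ)
    (hf : ∀ n, f n = ∑ j ∈ Finset.range N, a j n * F j)
    (hg : ∀ n, g n = ∑ p ∈ Finset.range M, b p n * G p) (n : ℕ) :
    conv f g n = ∑ j ∈ Finset.range N, ∑ p ∈ Finset.range M,
      F j * G p * conv (a j) (b p) n := by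
  unfold conv
  have step1 : ∀ i ∈ Finset.range (n+1), f (n-i) * g i
      = ∑ j ∈ Finset.range N, ∑ p ∈ Finset.range M,
          (a j (n-i) * F j) * (b p i * G p) := by
    intro i _
    rw [hf, hg, Finset.sum_mul_sum]
  rw [Finset.sum_congr rfl step1, Finset.sum_comm]
  apply Finset.sum_congr rfl
  intro j _
  rw [Finset.sum_comm]
  apply Finset.sum_congr rfl
  intro p _
  rw [Finset.mul_sum]
  apply Finset.sum_congr rfl
  intro i _
  ring

lemma wsum_estimate {α : ℝ} (hα : 0 < α) {φ : ℕ → ℝ} {c : ℝ} (h : omegaLoc α φ c)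
    {j p : ℕ} (hj : 1 ≤ j) (hjp : j ≤ p) :
    ∑ s ∈ Finset.range (j+p+1), φ s * |wseq α j p s| ≤ c * (φ j * φ p) := by
  have hk : ∀ m, 0 ≤ genC α m := fun m => (genC_pos hα m).le
  have ptwise : ∀ s ∈ Finset.range (j+p+1), φ s * |wseq α j p s|
      = (if p ≤ s ∧ s ≤ j+p then genC α (j+p-s) * φ s else 0)
        + (if s < j then genC α (j+p-s) * φ s else 0) := by
    intro s _
    unfold wseq
    by_cases h1 : p ≤ s ∧ s ≤ j + p
    · rw [if_pos h1, if_pos h1, if_neg (by omega), abs_of_nonneg (hk _), add_zero, mul_comm]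
    · rw [if_neg h1, if_neg h1]
      by_cases h2 : s < j
      · rw [if_pos h2, if_pos h2, abs_neg, abs_of_nonneg (hk _), zero_add, mul_comm]
      · rw [if_neg h2, if_neg h2, abs_zero, mul_zero, add_zero]
  rw [Finset.sum_congr rfl ptwise, Finset.sum_add_distrib]
  have e1 : ∑ s ∈ Finset.range (j+p+1), (if p ≤ s ∧ s ≤ j+p then genC α (j+p-s) * φ s else 0)
      = ∑ m ∈ Finset.range (j+1), genC α m * φ (j+p-m) := by
    rw [← Finset.sum_filter]
    apply Finset.sum_nbij' (i := fun s => j + p - s) (j := fun m => j + p - m)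
    · intro a ha
      simp only [Finset.mem_filter, Finset.mem_range] at ha
      simp only [Finset.mem_range]
      omega
    · intro m hm
      simp only [Finset.mem_range] at hm
      simp only [Finset.mem_filter, Finset.mem_range]
      omega
    · intro a ha
      simp only [Finset.mem_filter, Finset.mem_range] at ha
      omega
    · intro m hm
      simp only [Finset.mem_range] at hm
      omega
    · intro a ha
      simp only [Finset.mem_filter, Finset.mem_range] at ha
      rw [show j + p - (j + p - a) = a by omega]
  have e2 : ∑ s ∈ Finset.range (j+p+1), (if s < j then genC α (j+p-s) * φ s else 0)
      = ∑ m ∈ Finset.Icc (p+1) (j+p), genC α m * φ (j+p-m) := by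
    rw [← Finset.sum_filter]
    apply Finset.sum_nbij' (i := fun s => j + p - s) (j := fun m => j + p - m)
    · intro a ha
      simp only [Finset.mem_filter, Finset.mem_range] at ha
      simp only [Finset.mem_Icc]
      omega
    · intro m hm
      simp only [Finset.mem_Icc] at hm
      simp only [Finset.mem_filter, Finset.mem_range]
      omega
    · intro a ha
      simp only [Finset.mem_filter, Finset.mem_range] at ha
      omega
    · intro m hm
      simp only [Finset.mem_Icc] at hm
      omega
    · intro a ha
      simp only [Finset.mem_filter, Finset.mem_range] at ha
      rw [show j + p - (j + p - a) = a by omega]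
  rw [e1, e2]
  have h' := h j p hj hjp
  rw [cesK_eq_genC hα] at h'
  exact h'

lemma wsum_j0 (α : ℝ) (φ : ℕ → ℝ) (p : ℕ) :
    ∑ s ∈ Finset.range (0+p+1), φ s * |wseq α 0 p s| = φ p := by
  rw [Finset.sum_eq_single_of_mem p (by simp only [Finset.mem_range]; omega)]
  · have : wseq α 0 p p = 1 := by
      unfold wseq
      rw [if_pos (by omega)]
      rw [show 0 + p - p = 0 by omega]
      rfl
    rw [this]
    norm_num
  · intro s hs hne
    simp only [Finset.mem_range] at hs
    have : wseq α 0 p s = 0 := by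
      unfold wseq
      rw [if_neg (by omega), if_neg (by omega)]
    rw [this]
    norm_num

theorem stmt11 (α : ℝ) (hα : 0 < α) (φ : ℕ → ℝ) (hφ : ∀ n, 0 < φ n) (c : ℝ) (hc : 0 < c)
    (h : omegaLoc α φ c) :
    (∀ f : ℕ → ℂ, (Function.support f).Finite → (qNorm α φ f = 0 ↔ f = 0)) ∧
    (∀ (a : ℂ) (f : ℕ → ℂ), (Function.support f).Finite →
      qNorm α φ (a • f) = ‖a‖ * qNorm α φ f) ∧
    (∀ f g : ℕ → ℂ, (Function.support f).Finite → (Function.support g).Finite →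
      qNorm α φ (f + g) ≤ qNorm α φ f + qNorm α φ g) ∧
    ∃ C : ℝ, 0 < C ∧ ∀ f g : ℕ → ℂ,
      (Function.support f).Finite → (Function.support g).Finite →
      qNorm α φ (fun n => conv f g n) ≤ C * qNorm α φ f * qNorm α φ g := by
  have qNorm_eq_sum' : ∀ {f : ℕ → ℂ} {N : ℕ}, (∀ i, N ≤ i → f i = 0) →
      qNorm α φ f = ∑ n ∈ Finset.range N, φ n * ‖T (genC (-α)) f n‖ := by
    intro f N hf
    unfold qNorm
    rw [finsum_eq_sum_of_support_subset _ (s := Finset.range N) ?_]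
    · exact Finset.sum_congr rfl fun n _ => by rw [weylDiff_eq_T hα hf n]
    · intro n hn
      simp only [Function.mem_support] at hn
      simp only [Finset.coe_range, Set.mem_Iio]
      by_contra hcon
      push_neg at hcon
      rw [weylDiff_eq_T hα hf n, T_bound _ hf n hcon] at hn
      simp at hn
  refine ⟨?_, ?_, ?_, ?_⟩
  · -- definiteness
    intro f hf
    obtain ⟨N, hN⟩ := exists_bound hf
    constructor
    · intro hq
      rw [qNorm_eq_sum' hN] at hq
      have hterm := (Finset.sum_eq_zero_iff_of_nonneg
        (fun n _ => mul_nonneg (hφ n).le (norm_nonneg _))).1 hq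
      have hT : ∀ n, T (genC (-α)) f n = 0 := by
        intro n
        rcases lt_or_ge n N with hlt | hge
        · have h0 := hterm n (Finset.mem_range.2 hlt)
          have := (mul_eq_zero.1 h0).resolve_left (hφ n).ne'
          exact norm_eq_zero.1 this
        · exact T_bound _ hN n hge
      funext n
      rw [Pi.zero_apply, ← T_inv (α := α) hN n]
      have hTz : T (genC (-α)) f = fun _ => (0:ℂ) := funext hT
      rw [hTz]
      show ∑ᶠ t : ℕ, (genC α t : ℂ) * (fun _ => (0:ℂ)) (t + n) = 0
      simp
    · intro hf0
      rw [hf0, qNorm_eq_sum' (f := (0 : ℕ → ℂ)) (N := 0) (fun i _ => rfl),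
        Finset.range_zero, Finset.sum_empty]
  · -- homogeneity
    intro a f hf
    obtain ⟨N, hN⟩ := exists_bound hf
    have hN' : ∀ i, N ≤ i → (a • f) i = 0 := fun i hi => by
      simp [Pi.smul_apply, smul_eq_mul, hN i hi]
    rw [qNorm_eq_sum' hN, qNorm_eq_sum' hN', Finset.mul_sum]
    apply Finset.sum_congr rfl
    intro n _
    have hsmul : (a • f) = fun m => a * f m := by
      funext m
      simp [Pi.smul_apply, smul_eq_mul]
    rw [hsmul, T_mul _ a hN, norm_mul]
    ring
  · -- triangle inequality
    intro f g hf hg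
    obtain ⟨N, hN⟩ := exists_bound hf
    obtain ⟨M, hM⟩ := exists_bound hg
    have hNf : ∀ i, max N M ≤ i → f i = 0 := fun i hi => hN i (le_trans (le_max_left _ _) hi)
    have hMg : ∀ i, max N M ≤ i → g i = 0 := fun i hi => hM i (le_trans (le_max_right _ _) hi)
    have hfg : ∀ i, max N M ≤ i → (f + g) i = 0 := fun i hi => by
      simp [Pi.add_apply, hNf i hi, hMg i hi]
    rw [qNorm_eq_sum' hfg, qNorm_eq_sum' hNf, qNorm_eq_sum' hMg, ← Finset.sum_add_distrib]
    apply Finset.sum_le_sum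
    intro n _
    rw [T_add _ hNf hMg n]
    calc φ n * ‖T (genC (-α)) f n + T (genC (-α)) g n‖
        ≤ φ n * (‖T (genC (-α)) f n‖ + ‖T (genC (-α)) g n‖) :=
          mul_le_mul_of_nonneg_left (norm_add_le _ _) (hφ n).le
      _ = φ n * ‖T (genC (-α)) f n‖ + φ n * ‖T (genC (-α)) g n‖ := by
          ring
  · -- submultiplicativity
    refine ⟨c + (φ 0)⁻¹, add_pos hc (inv_pos.2 (hφ 0)), ?_⟩
    intro f g hf hg
    obtain ⟨N, hN⟩ := exists_bound hf
    obtain ⟨M, hM⟩ := exists_bound hg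
    have hFb : ∀ i, N ≤ i → T (genC (-α)) f i = 0 := T_bound _ hN
    have hGb : ∀ i, M ≤ i → T (genC (-α)) g i = 0 := T_bound _ hM
    have hub : ∀ j : ℕ, ∀ i, j+1 ≤ i → ((useq α j i : ℝ) : ℂ) = 0 := by
      intro j i hi
      rw [useq, if_neg (by omega)]
      norm_num
    have hdecomp : ∀ (F : ℕ → ℂ) (K : ℕ), (∀ i, K ≤ i → F i = 0) → ∀ n,
        T (genC α) F n = ∑ j ∈ Finset.range K, ((useq α j n : ℝ) : ℂ) * F j := by
      intro F K hK n
      rw [T_expand (genC α) hK n]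
      apply Finset.sum_congr rfl
      intro j _
      congr 1
      rw [useq]
      split_ifs <;> simp
    have hfd : ∀ n, f n = ∑ j ∈ Finset.range N, ((useq α j n : ℝ) : ℂ) * T (genC (-α)) f j :=
      fun n => by rw [← hdecomp _ N hFb n, T_inv (α := α) hN n]
    have hgd : ∀ n, g n = ∑ p ∈ Finset.range M, ((useq α p n : ℝ) : ℂ) * T (genC (-α)) g p :=
      fun n => by rw [← hdecomp _ M hGb n, T_inv (α := α) hM n]
    have kernel : ∀ j p : ℕ, j ≤ p → ∀ s,
        T (genC (-α)) (conv (fun i => ((useq α j i : ℝ):ℂ)) (fun i => ((useq α p i : ℝ):ℂ))) s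
          = ((wseq α j p s : ℝ) : ℂ) := by
      intro j p hjp s
      have hwb : ∀ i, j+p+1 ≤ i → ((wseq α j p i : ℝ):ℂ) = 0 := by
        intro i hi
        rw [wseq_bound α j p i hi]
        norm_num
      have hconv_eq : conv (fun i => ((useq α j i : ℝ):ℂ)) (fun i => ((useq α p i : ℝ):ℂ))
          = T (genC α) (fun i => ((wseq α j p i : ℝ):ℂ)) := by
        funext n
        rw [T_eq_sum (genC α) (f := fun i => ((wseq α j p i : ℝ):ℂ)) hwb n]
        unfold conv
        have e1 : ∑ t ∈ Finset.range (j+p+1), (genC α t : ℂ) * ((wseq α j p (t+n) : ℝ):ℂ)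
            = (((∑ t ∈ Finset.range (j+p+1), genC α t * wseq α j p (t+n) : ℝ)) : ℂ) := by
          push_cast
          rfl
        rw [e1, key_identity α hjp n]
        push_cast
        rfl
      rw [hconv_eq, T_genC_comp (-α) α hwb s, show -α + α = (0:ℝ) by ring, T_genC_zero]
    have hcb : ∀ (j p : ℕ), j < N → p < M → ∀ i, N + M ≤ i →
        conv (fun m => ((useq α j m : ℝ):ℂ)) (fun m => ((useq α p m : ℝ):ℂ)) i = 0 := by
      intro j p hjN hpM i hi
      exact conv_bound (f := fun m => ((useq α j m : ℝ):ℂ)) (g := fun m => ((useq α p m : ℝ):ℂ))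
        (N := j+1) (M := p+1) (hub j) (hub p) i (by omega)
    have hconvb : ∀ i, N + M ≤ i → conv f g i = 0 := conv_bound hN hM
    have hHb : ∀ q ∈ Finset.range N ×ˢ Finset.range M, ∀ i, N + M ≤ i →
        (T (genC (-α)) f q.1 * T (genC (-α)) g q.2)
          * conv (fun m => ((useq α q.1 m : ℝ):ℂ)) (fun m => ((useq α q.2 m : ℝ):ℂ)) i = 0 := by
      intro q hq i hi
      simp only [Finset.mem_product, Finset.mem_range] at hq
      rw [hcb q.1 q.2 hq.1 hq.2 i hi, mul_zero]
    have hWconv : ∀ s, T (genC (-α)) (fun n => conv f g n) s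
        = ∑ q ∈ Finset.range N ×ˢ Finset.range M,
            T (genC (-α)) f q.1 * T (genC (-α)) g q.2
              * ((wseq α (min q.1 q.2) (max q.1 q.2) s : ℝ):ℂ) := by
      intro s
      have hrw : (fun n => conv f g n) = fun n => ∑ q ∈ Finset.range N ×ˢ Finset.range M,
          (T (genC (-α)) f q.1 * T (genC (-α)) g q.2)
            * conv (fun m => ((useq α q.1 m : ℝ):ℂ)) (fun m => ((useq α q.2 m : ℝ):ℂ)) n := by
        funext n
        rw [conv_expand (N := N) (M := M) (T (genC (-α)) f) (T (genC (-α)) g)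
          (fun j m => ((useq α j m : ℝ):ℂ)) (fun p m => ((useq α p m : ℝ):ℂ)) hfd hgd n,
          ← Finset.sum_product']
      rw [hrw, T_sum (genC (-α)) (Finset.range N ×ˢ Finset.range M)
        (fun q n => (T (genC (-α)) f q.1 * T (genC (-α)) g q.2)
          * conv (fun m => ((useq α q.1 m : ℝ):ℂ)) (fun m => ((useq α q.2 m : ℝ):ℂ)) n)
        (N := N+M) hHb s]
      apply Finset.sum_congr rfl
      intro q hq
      simp only [Finset.mem_product, Finset.mem_range] at hq
      rw [T_mul _ _ (N := N+M) (fun i hi => hcb q.1 q.2 hq.1 hq.2 i hi) s]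
      congr 1
      rcases le_total q.1 q.2 with hle | hle
      · rw [min_eq_left hle, max_eq_right hle]
        exact kernel q.1 q.2 hle s
      · rw [min_eq_right hle, max_eq_left hle]
        rw [show conv (fun m => ((useq α q.1 m:ℝ):ℂ)) (fun m => ((useq α q.2 m:ℝ):ℂ))
            = conv (fun m => ((useq α q.2 m:ℝ):ℂ)) (fun m => ((useq α q.1 m:ℝ):ℂ)) from
          funext (fun n => conv_comm _ _ n)]
        exact kernel q.2 q.1 hle s
    rw [qNorm_eq_sum' (f := fun n => conv f g n) (N := N+M) (fun i hi => hconvb i hi),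
      qNorm_eq_sum' hN, qNorm_eq_sum' hM]
    have hC'pos : (0:ℝ) < c + (φ 0)⁻¹ := add_pos hc (inv_pos.2 (hφ 0))
    have step1 : ∑ s ∈ Finset.range (N+M),
          φ s * ‖T (genC (-α)) (fun n => conv f g n) s‖
        ≤ ∑ q ∈ Finset.range N ×ˢ Finset.range M,
            (‖T (genC (-α)) f q.1‖ * ‖T (genC (-α)) g q.2‖)
              * ∑ s ∈ Finset.range (N+M), φ s * |wseq α (min q.1 q.2) (max q.1 q.2) s| := by
      have per_s : ∀ s ∈ Finset.range (N+M),
          φ s * ‖T (genC (-α)) (fun n => conv f g n) s‖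
          ≤ ∑ q ∈ Finset.range N ×ˢ Finset.range M,
              (‖T (genC (-α)) f q.1‖ * ‖T (genC (-α)) g q.2‖)
                * (φ s * |wseq α (min q.1 q.2) (max q.1 q.2) s|) := by
        intro s _
        rw [hWconv s]
        calc φ s * ‖∑ q ∈ Finset.range N ×ˢ Finset.range M,
              T (genC (-α)) f q.1 * T (genC (-α)) g q.2
                * ((wseq α (min q.1 q.2) (max q.1 q.2) s : ℝ):ℂ)‖
            ≤ φ s * ∑ q ∈ Finset.range N ×ˢ Finset.range M,
                ‖T (genC (-α)) f q.1 * T (genC (-α)) g q.2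
                  * ((wseq α (min q.1 q.2) (max q.1 q.2) s : ℝ):ℂ)‖ :=
              mul_le_mul_of_nonneg_left (norm_sum_le _ _) (hφ s).le
          _ = ∑ q ∈ Finset.range N ×ˢ Finset.range M,
              (‖T (genC (-α)) f q.1‖ * ‖T (genC (-α)) g q.2‖)
                * (φ s * |wseq α (min q.1 q.2) (max q.1 q.2) s|) := by
              rw [Finset.mul_sum]
              apply Finset.sum_congr rfl
              intro q _
              rw [norm_mul, norm_mul, Complex.norm_real, Real.norm_eq_abs]
              ring
      calc ∑ s ∈ Finset.range (N+M),
            φ s * ‖T (genC (-α)) (fun n => conv f g n) s‖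
          ≤ ∑ s ∈ Finset.range (N+M), ∑ q ∈ Finset.range N ×ˢ Finset.range M,
              (‖T (genC (-α)) f q.1‖ * ‖T (genC (-α)) g q.2‖)
                * (φ s * |wseq α (min q.1 q.2) (max q.1 q.2) s|) :=
            Finset.sum_le_sum per_s
        _ = ∑ q ∈ Finset.range N ×ˢ Finset.range M, ∑ s ∈ Finset.range (N+M),
              (‖T (genC (-α)) f q.1‖ * ‖T (genC (-α)) g q.2‖)
                * (φ s * |wseq α (min q.1 q.2) (max q.1 q.2) s|) := Finset.sum_comm
        _ = ∑ q ∈ Finset.range N ×ˢ Finset.range M,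
              (‖T (genC (-α)) f q.1‖ * ‖T (genC (-α)) g q.2‖)
                * ∑ s ∈ Finset.range (N+M), φ s * |wseq α (min q.1 q.2) (max q.1 q.2) s| := by
            apply Finset.sum_congr rfl
            intro q _
            rw [Finset.mul_sum]
    have step2 : ∀ q ∈ Finset.range N ×ˢ Finset.range M,
        ∑ s ∈ Finset.range (N+M), φ s * |wseq α (min q.1 q.2) (max q.1 q.2) s|
          ≤ (c + (φ 0)⁻¹) * (φ q.1 * φ q.2) := by
      intro q hq
      simp only [Finset.mem_product, Finset.mem_range] at hq
      have hmm : min q.1 q.2 + max q.1 q.2 + 1 ≤ N + M := by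
        rcases le_total q.1 q.2 with hle | hle
        · rw [min_eq_left hle, max_eq_right hle]; omega
        · rw [min_eq_right hle, max_eq_left hle]; omega
      have hred : ∑ s ∈ Finset.range (N+M), φ s * |wseq α (min q.1 q.2) (max q.1 q.2) s|
          = ∑ s ∈ Finset.range (min q.1 q.2 + max q.1 q.2 + 1),
              φ s * |wseq α (min q.1 q.2) (max q.1 q.2) s| := by
        rw [eq_comm]
        apply Finset.sum_subset (Finset.range_subset_range.2 hmm)
        intro x _ hx
        simp only [Finset.mem_range, not_lt] at hx
        rw [wseq_bound _ _ _ x hx, abs_zero, mul_zero]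
      have hφφ : φ (min q.1 q.2) * φ (max q.1 q.2) = φ q.1 * φ q.2 := by
        rcases le_total q.1 q.2 with hle | hle
        · rw [min_eq_left hle, max_eq_right hle]
        · rw [min_eq_right hle, max_eq_left hle]; ring
      rw [hred]
      rcases Nat.eq_zero_or_pos (min q.1 q.2) with hz | hpos
      · have hφφ0 : φ q.1 * φ q.2 = φ 0 * φ (max q.1 q.2) := by rw [← hφφ, hz]
        rw [hz, wsum_j0 α φ (max q.1 q.2), hφφ0]
        have key0 : (φ 0)⁻¹ * (φ 0 * φ (max q.1 q.2)) = φ (max q.1 q.2) := by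
          rw [← mul_assoc, inv_mul_cancel₀ (hφ 0).ne', one_mul]
        nlinarith [mul_nonneg hc.le (mul_nonneg (hφ 0).le (hφ (max q.1 q.2)).le)]
      · calc ∑ s ∈ Finset.range (min q.1 q.2 + max q.1 q.2 + 1),
              φ s * |wseq α (min q.1 q.2) (max q.1 q.2) s|
            ≤ c * (φ (min q.1 q.2) * φ (max q.1 q.2)) :=
              wsum_estimate hα h hpos (min_le_max)
          _ ≤ (c + (φ 0)⁻¹) * (φ (min q.1 q.2) * φ (max q.1 q.2)) := by
              apply mul_le_mul_of_nonneg_right _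
                (mul_nonneg (hφ _).le (hφ _).le)
              have hip : (0:ℝ) < (φ 0)⁻¹ := inv_pos.2 (hφ 0)
              linarith
          _ = (c + (φ 0)⁻¹) * (φ q.1 * φ q.2) := by rw [hφφ]
    calc ∑ s ∈ Finset.range (N+M), φ s * ‖T (genC (-α)) (fun n => conv f g n) s‖
        ≤ ∑ q ∈ Finset.range N ×ˢ Finset.range M,
            (‖T (genC (-α)) f q.1‖ * ‖T (genC (-α)) g q.2‖)
              * ∑ s ∈ Finset.range (N+M), φ s * |wseq α (min q.1 q.2) (max q.1 q.2) s| := step1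
      _ ≤ ∑ q ∈ Finset.range N ×ˢ Finset.range M,
            (‖T (genC (-α)) f q.1‖ * ‖T (genC (-α)) g q.2‖)
              * ((c + (φ 0)⁻¹) * (φ q.1 * φ q.2)) :=
          Finset.sum_le_sum (fun q hq => mul_le_mul_of_nonneg_left (step2 q hq)
            (mul_nonneg (norm_nonneg _) (norm_nonneg _)))
      _ = (c + (φ 0)⁻¹) * (∑ n ∈ Finset.range N, φ n * ‖T (genC (-α)) f n‖)
            * (∑ n ∈ Finset.range M, φ n * ‖T (genC (-α)) g n‖) := by
          rw [mul_assoc, Finset.sum_mul_sum, ← Finset.sum_product', Finset.mul_sum]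
          apply Finset.sum_congr rfl
          intro q _
          ring
end

section
/- For 0 < α < β and every finitely supported sequence f : ℕ₀ → ℂ one has q_α(f) ≤ q_β(f), where q_γ(f) = ∑_{n=0}^∞ k^{γ+1}(n)·|W^γ f(n)|. -/
/-- `q_α(f) = ∑_{n=0}^∞ k^{α+1}(n)·|W^α f(n)|`, a finite sum for finitely supported `f`. -/
noncomputable def qA (α : ℝ) (f : ℕ → ℂ) : ℝ :=
  ∑ᶠ n : ℕ, cesK (α + 1) n * ‖weylDiff α f n‖

open Finset

lemma cesK_pos {a : ℝ} (ha : 0 < a) (n : ℕ) : 0 < cesK a n := by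
  unfold cesK
  apply div_pos (Real.Gamma_pos_of_pos (by positivity))
    (mul_pos (Real.Gamma_pos_of_pos ha) (Real.Gamma_pos_of_pos (by positivity)))

lemma cesK_zero {a : ℝ} (ha : 0 < a) : cesK a 0 = 1 := by
  unfold cesK
  rw [Nat.cast_zero, zero_add, zero_add, Real.Gamma_one, mul_one,
    div_self (Real.Gamma_pos_of_pos ha).ne']

lemma cesK_one (n : ℕ) : cesK 1 n = 1 := by
  unfold cesK
  rw [Real.Gamma_one, one_mul, div_self (Real.Gamma_pos_of_pos (by positivity)).ne']

lemma cesK_rec {a : ℝ} (ha : 0 < a) (n : ℕ) :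
    ((n : ℝ) + 1) * cesK a (n + 1) = ((n : ℝ) + a) * cesK a n := by
  unfold cesK
  push_cast
  rw [show (n : ℝ) + 1 + a = ((n : ℝ) + a) + 1 by ring,
    Real.Gamma_add_one (by positivity),
    show (n : ℝ) + 1 + 1 = ((n : ℝ) + 1) + 1 by ring,
    Real.Gamma_add_one (by positivity)]
  have h1 : Real.Gamma a ≠ 0 := (Real.Gamma_pos_of_pos ha).ne'
  have h2 : Real.Gamma ((n : ℝ) + 1) ≠ 0 := (Real.Gamma_pos_of_pos (by positivity)).ne'
  field_simp

lemma cesK_vandermonde {a b : ℝ} (ha : 0 < a) (hb : 0 < b) (m : ℕ) :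
    ∑ p ∈ Finset.HasAntidiagonal.antidiagonal m, cesK a p.1 * cesK b p.2 = cesK (a + b) m := by
  induction m with
  | zero => simp [cesK_zero ha, cesK_zero hb, cesK_zero (by positivity : (0:ℝ) < a + b)]
  | succ m ih =>
    have key : ((m : ℝ) + 1) * ∑ p ∈ Finset.HasAntidiagonal.antidiagonal (m+1), cesK a p.1 * cesK b p.2
        = ((m : ℝ) + a + b) * ∑ p ∈ Finset.HasAntidiagonal.antidiagonal m, cesK a p.1 * cesK b p.2 := by
      rw [Finset.mul_sum, Finset.mul_sum]
      have split : ∀ p ∈ Finset.HasAntidiagonal.antidiagonal (m+1),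
          ((m:ℝ)+1) * (cesK a p.1 * cesK b p.2)
          = (p.1 : ℝ) * cesK a p.1 * cesK b p.2 + cesK a p.1 * ((p.2:ℝ) * cesK b p.2) := by
        intro p hp
        have : p.1 + p.2 = m + 1 := Finset.HasAntidiagonal.mem_antidiagonal.mp hp
        have : ((p.1 : ℝ) + p.2) = (m : ℝ) + 1 := by exact_mod_cast congrArg Nat.cast this
        linear_combination (-(cesK a p.1 * cesK b p.2)) * this
      rw [Finset.sum_congr rfl split, Finset.sum_add_distrib]
      have e1 : ∑ p ∈ Finset.HasAntidiagonal.antidiagonal (m+1), (p.1 : ℝ) * cesK a p.1 * cesK b p.2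
          = ∑ p ∈ Finset.HasAntidiagonal.antidiagonal m, ((p.1:ℝ) + a) * cesK a p.1 * cesK b p.2 := by
        rw [Finset.Nat.antidiagonal_succ, Finset.sum_cons]
        simp only [Nat.cast_zero, zero_mul, zero_add, Finset.sum_map]
        refine Finset.sum_congr rfl ?_
        intro p _
        simp only [Function.Embedding.prodMap, Function.Embedding.coeFn_mk,
          Function.Embedding.refl_apply, Prod.map_fst, Prod.map_snd, Nat.succ_eq_add_one]
        push_cast
        linear_combination cesK b p.2 * cesK_rec ha p.1
      have e2 : ∑ p ∈ Finset.HasAntidiagonal.antidiagonal (m+1), cesK a p.1 * ((p.2:ℝ) * cesK b p.2)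
          = ∑ p ∈ Finset.HasAntidiagonal.antidiagonal m, cesK a p.1 * (((p.2:ℝ) + b) * cesK b p.2) := by
        rw [Finset.Nat.antidiagonal_succ', Finset.sum_cons]
        simp only [Nat.cast_zero, zero_mul, mul_zero, zero_add, Finset.sum_map]
        refine Finset.sum_congr rfl ?_
        intro p _
        simp only [Function.Embedding.prodMap, Function.Embedding.coeFn_mk,
          Function.Embedding.refl_apply, Prod.map_fst, Prod.map_snd, Nat.succ_eq_add_one]
        push_cast
        linear_combination cesK a p.1 * cesK_rec hb p.2
      rw [e1, e2, ← Finset.sum_add_distrib]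
      refine Finset.sum_congr rfl ?_
      intro p hp
      have hm : p.1 + p.2 = m := Finset.HasAntidiagonal.mem_antidiagonal.mp hp
      have hm' : ((p.1 : ℝ) + p.2) = (m : ℝ) := by exact_mod_cast congrArg Nat.cast hm
      linear_combination (cesK a p.1 * cesK b p.2) * hm'
    have hrec := cesK_rec (by positivity : (0:ℝ) < a + b) m
    rw [ih] at key
    have hne : ((m : ℝ) + 1) ≠ 0 := by positivity
    apply mul_left_cancel₀ hne
    rw [key, hrec]; ring

section Analytic

variable {N : ℕ} {f g : ℕ → ℂ}

lemma weylSum_eq_sum (hN : ∀ n, N ≤ n → f n = 0) (a : ℝ) (n : ℕ) :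
    weylSum a f n = ∑ j ∈ range N, (cesK a j : ℂ) * f (j + n) := by
  apply finsum_eq_sum_of_support_subset
  intro j hj
  simp only [Function.mem_support] at hj
  simp only [coe_range, Set.mem_Iio]
  by_contra h
  push_neg at h
  exact hj (by rw [hN (j + n) (le_trans h (Nat.le_add_right _ _)), mul_zero])

lemma weylSum_vb (hN : ∀ n, N ≤ n → f n = 0) (a : ℝ) :
    ∀ n, N ≤ n → weylSum a f n = 0 := by
  intro n hn
  have h : ∀ j : ℕ, (cesK a j : ℂ) * f (j + n) = 0 := fun j => by
    rw [hN _ (le_trans hn (Nat.le_add_left _ _)), mul_zero]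
  rw [weylSum, finsum_congr h, finsum_zero]

lemma fdiff_vb (h : ∀ n, N ≤ n → g n = 0) : ∀ n, N ≤ n → fdiff g n = 0 := by
  intro n hn
  simp [fdiff, h n hn, h (n + 1) (le_trans hn (Nat.le_succ n))]

lemma fdiff_iter_vb (h : ∀ n, N ≤ n → g n = 0) (k : ℕ) :
    ∀ n, N ≤ n → fdiff^[k] g n = 0 := by
  induction k with
  | zero => exact h
  | succ k ih =>
    intro n hn
    rw [Function.iterate_succ_apply']
    exact fdiff_vb ih n hn

lemma fdiff_weylSum (hN : ∀ n, N ≤ n → f n = 0) (a : ℝ) :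
    fdiff (weylSum a f) = weylSum a (fdiff f) := by
  funext n
  have hN' : ∀ n, N ≤ n → fdiff f n = 0 := fdiff_vb hN
  show weylSum a f (n + 1) - weylSum a f n = _
  rw [weylSum_eq_sum hN a (n + 1), weylSum_eq_sum hN a n, weylSum_eq_sum hN' a n,
    ← Finset.sum_sub_distrib]
  refine Finset.sum_congr rfl fun j _ => ?_
  have : j + (n + 1) = (j + n) + 1 := by omega
  rw [this]
  simp [fdiff, mul_sub]

lemma fdiff_iter_weylSum (hN : ∀ n, N ≤ n → f n = 0) (a : ℝ) (k : ℕ) :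
    fdiff^[k] (weylSum a f) = weylSum a (fdiff^[k] f) := by
  induction k with
  | zero => rfl
  | succ k ih =>
    rw [Function.iterate_succ_apply', ih, fdiff_weylSum (fdiff_iter_vb hN k) a,
      Function.iterate_succ_apply']

lemma weylSum_smul (hN : ∀ n, N ≤ n → f n = 0) (a : ℝ) (c : ℂ) :
    weylSum a (fun n => c * f n) = fun n => c * weylSum a f n := by
  funext n
  have hN' : ∀ m, N ≤ m → c * f m = 0 := fun m hm => by rw [hN m hm, mul_zero]
  rw [weylSum_eq_sum hN' a n, weylSum_eq_sum hN a n, Finset.mul_sum]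
  exact Finset.sum_congr rfl fun j _ => by ring

lemma fdiff_smul (c : ℂ) : fdiff (fun n => c * g n) = fun n => c * fdiff g n := by
  funext n; simp [fdiff, mul_sub]

lemma fdiff_iter_smul (c : ℂ) (k : ℕ) :
    fdiff^[k] (fun n => c * g n) = fun n => c * fdiff^[k] g n := by
  induction k with
  | zero => rfl
  | succ k ih => rw [Function.iterate_succ_apply', ih, fdiff_smul c,
      Function.iterate_succ_apply']

lemma double_sum_eq {M : Type*} [AddCommMonoid M] (N : ℕ) (F : ℕ → ℕ → M)
    (hF : ∀ i j, N ≤ i + j → F i j = 0) :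
    ∑ i ∈ range N, ∑ j ∈ range N, F i j
      = ∑ m ∈ range N, ∑ p ∈ Finset.HasAntidiagonal.antidiagonal m, F p.1 p.2 := by
  have hdisj : (↑(range N) : Set ℕ).PairwiseDisjoint (fun m => Finset.HasAntidiagonal.antidiagonal m) := by
    intro m _ m' _ hne
    refine Finset.disjoint_left.mpr fun p hp hp' => hne ?_
    rw [← Finset.HasAntidiagonal.mem_antidiagonal.mp hp, Finset.HasAntidiagonal.mem_antidiagonal.mp hp']
  rw [← Finset.sum_biUnion hdisj]
  have hmem : ∀ p : ℕ × ℕ,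
      p ∈ (range N).biUnion (fun m => Finset.HasAntidiagonal.antidiagonal m) ↔ p.1 + p.2 < N := by
    intro p
    simp only [Finset.mem_biUnion, Finset.mem_range, Finset.HasAntidiagonal.mem_antidiagonal]
    constructor
    · rintro ⟨m, hm, rfl⟩; exact hm
    · intro h; exact ⟨p.1 + p.2, h, rfl⟩
  rw [← Finset.sum_product']
  symm
  apply Finset.sum_subset
  · intro p hp
    rw [Finset.mem_product, Finset.mem_range, Finset.mem_range]
    have := (hmem p).mp hp
    omega
  · intro p _ hp
    have h2 : ¬ (p.1 + p.2 < N) := fun hc => hp ((hmem p).mpr hc)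
    exact hF p.1 p.2 (by omega)

lemma weylSum_weylSum (hN : ∀ n, N ≤ n → f n = 0) {a b : ℝ} (ha : 0 < a) (hb : 0 < b) :
    weylSum a (weylSum b f) = weylSum (a + b) f := by
  funext n
  have hNb := weylSum_vb hN b
  rw [weylSum_eq_sum hNb a n, weylSum_eq_sum hN (a + b) n]
  have e1 : ∀ j ∈ range N, (cesK a j : ℂ) * weylSum b f (j + n)
      = ∑ i ∈ range N, (cesK a j : ℂ) * ((cesK b i : ℂ) * f (j + i + n)) := by
    intro j _
    rw [weylSum_eq_sum hN b (j + n), Finset.mul_sum]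
    exact Finset.sum_congr rfl fun i _ => by rw [show i + (j + n) = j + i + n by omega]
  rw [Finset.sum_congr rfl e1,
    double_sum_eq N (fun x y => (cesK a x : ℂ) * ((cesK b y : ℂ) * f (x + y + n)))
      (fun x y hxy => by simp [hN (x + y + n) (by omega)])]
  refine Finset.sum_congr rfl fun m hm => ?_
  have e2 : ∀ p ∈ Finset.HasAntidiagonal.antidiagonal m,
      (cesK a p.1 : ℂ) * ((cesK b p.2 : ℂ) * f (p.1 + p.2 + n))
        = ((cesK a p.1 * cesK b p.2 : ℝ) : ℂ) * f (m + n) := by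
    intro p hp
    rw [Finset.HasAntidiagonal.mem_antidiagonal.mp hp]
    push_cast
    ring
  rw [Finset.sum_congr rfl e2, ← Finset.sum_mul, ← Complex.ofReal_sum,
    cesK_vandermonde ha hb m]

lemma fdiff_weylSum_one (hN : ∀ n, N ≤ n → f n = 0) :
    fdiff (weylSum 1 f) = fun n => - f n := by
  funext n
  show weylSum 1 f (n + 1) - weylSum 1 f n = - f n
  rw [weylSum_eq_sum hN 1 (n + 1), weylSum_eq_sum hN 1 n]
  simp only [cesK_one, Complex.ofReal_one, one_mul]
  have h1 : ∑ j ∈ range N, f (j + (n + 1)) = ∑ j ∈ range N, (fun j => f (j + n)) (j + 1) :=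
    Finset.sum_congr rfl fun j _ => congrArg f (by omega)
  rw [h1, ← Finset.sum_sub_distrib, Finset.sum_range_sub (fun j => f (j + n)) N,
    hN (N + n) (Nat.le_add_right _ _)]
  simp

lemma weylDiff_eq_general (hN : ∀ n, N ≤ n → f n = 0) {γ : ℝ} (hγ : 0 < γ)
    (k : ℕ) (hk : ⌊γ⌋₊ + 1 ≤ k) :
    weylDiff γ f = fun n => (-1 : ℂ) ^ k * fdiff^[k] (weylSum ((k : ℝ) - γ) f) n := by
  induction k with
  | zero => omega
  | succ k ih =>
    rcases eq_or_lt_of_le hk with heq | hlt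
    · rw [weylDiff, if_neg hγ.ne']
      have h1 : ((⌊γ⌋₊ : ℝ) + 1 - γ) = ((k : ℝ) + 1 - γ) := by
        have : (⌊γ⌋₊ : ℝ) + 1 = ((k : ℕ) : ℝ) + 1 := by exact_mod_cast congrArg Nat.cast heq
        linarith
      rw [heq, h1]
      push_cast
      rfl
    · have hk' : ⌊γ⌋₊ + 1 ≤ k := by omega
      have hkγ : (0 : ℝ) < (k : ℝ) - γ := by
        have h2 : γ < (⌊γ⌋₊ : ℝ) + 1 := Nat.lt_floor_add_one γ
        have h3 : ((⌊γ⌋₊ : ℝ) + 1) ≤ (k : ℝ) := by exact_mod_cast hk'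
        linarith
      rw [ih hk']
      funext n
      set g := weylSum ((k : ℝ) - γ) f with hg
      have hgvb : ∀ n, N ≤ n → g n = 0 := weylSum_vb hN _
      have e2 : weylSum ((((k : ℕ) + 1 : ℕ) : ℝ) - γ) f = weylSum 1 g := by
        rw [hg, weylSum_weylSum hN one_pos hkγ]
        push_cast
        ring_nf
      rw [e2, Function.iterate_succ_apply, fdiff_weylSum_one hgvb]
      have e3 : (fun n => - g n) = fun n => (-1 : ℂ) * g n := by funext n; ring
      rw [e3, fdiff_iter_smul (-1 : ℂ) k]
      ring

lemma weylDiff_vb (hN : ∀ n, N ≤ n → f n = 0) {γ : ℝ} (hγ : 0 < γ) :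
    ∀ n, N ≤ n → weylDiff γ f n = 0 := by
  intro n hn
  rw [weylDiff, if_neg hγ.ne']
  rw [fdiff_iter_vb (weylSum_vb hN _) _ n hn, mul_zero]

lemma weylDiff_comp (hN : ∀ n, N ≤ n → f n = 0) {α β : ℝ} (hα : 0 < α) (hβ : α < β) :
    weylDiff α f = weylSum (β - α) (weylDiff β f) := by
  have hβ0 : 0 < β := lt_trans hα hβ
  have hkα : ⌊α⌋₊ + 1 ≤ ⌊β⌋₊ + 1 := by
    have := Nat.floor_le_floor (le_of_lt hβ)
    omega
  rw [weylDiff_eq_general hN hα (⌊β⌋₊ + 1) hkα]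
  rw [show weylDiff β f = fun n => (-1 : ℂ) ^ (⌊β⌋₊ + 1)
      * fdiff^[⌊β⌋₊ + 1] (weylSum ((⌊β⌋₊ : ℝ) + 1 - β) f) n from by
    rw [weylDiff, if_neg hβ0.ne']]
  have hb1 : (0 : ℝ) < (⌊β⌋₊ : ℝ) + 1 - β := by
    have := Nat.lt_floor_add_one β; linarith
  set g := weylSum ((⌊β⌋₊ : ℝ) + 1 - β) f with hgdef
  have hgvb : ∀ n, N ≤ n → g n = 0 := weylSum_vb hN _
  have hg2 : ∀ n, N ≤ n → fdiff^[⌊β⌋₊ + 1] g n = 0 := fdiff_iter_vb hgvb _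
  rw [weylSum_smul hg2 (β - α) ((-1 : ℂ) ^ (⌊β⌋₊ + 1))]
  rw [← fdiff_iter_weylSum hgvb (β - α) (⌊β⌋₊ + 1)]
  rw [hgdef, weylSum_weylSum hN (by linarith) hb1]
  have harg : (β - α + ((⌊β⌋₊ : ℝ) + 1 - β)) = (((⌊β⌋₊ + 1 : ℕ) : ℝ) - α) := by
    push_cast; ring
  rw [harg]

end Analytic

theorem stmt12 (α β : ℝ) (hα : 0 < α) (hβ : α < β) (f : ℕ → ℂ)
    (hf : (Function.support f).Finite) :
    qA α f ≤ qA β f := by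
  obtain ⟨N0, hN0⟩ := hf.bddAbove
  have hN : ∀ n, N0 + 1 ≤ n → f n = 0 := by
    intro n hn
    by_contra h
    have := hN0 (Function.mem_support.mpr h)
    omega
  set N := N0 + 1
  have hβ0 : 0 < β := lt_trans hα hβ
  have hba : 0 < β - α := sub_pos.mpr hβ
  have hvbβ := weylDiff_vb hN hβ0
  have hvbα := weylDiff_vb hN hα
  have hcomp := weylDiff_comp hN hα hβ
  rw [qA, qA]
  rw [finsum_eq_sum_of_support_subset _ (s := range N) (by
    intro n hn
    simp only [Function.mem_support] at hn
    simp only [coe_range, Set.mem_Iio]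
    by_contra h
    push_neg at h
    rw [hvbα n h] at hn
    simp at hn)]
  rw [finsum_eq_sum_of_support_subset _ (s := range N) (by
    intro n hn
    simp only [Function.mem_support] at hn
    simp only [coe_range, Set.mem_Iio]
    by_contra h
    push_neg at h
    rw [hvbβ n h] at hn
    simp at hn)]
  have step1 : ∀ n ∈ range N, cesK (α + 1) n * ‖weylDiff α f n‖
      ≤ ∑ j ∈ range N, cesK (α + 1) n * (cesK (β - α) j * ‖weylDiff β f (n + j)‖) := by
    intro n _
    rw [hcomp, weylSum_eq_sum hvbβ (β - α) n]
    calc cesK (α + 1) n * ‖∑ j ∈ range N, (cesK (β - α) j : ℂ) * weylDiff β f (j + n)‖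
        ≤ cesK (α + 1) n * ∑ j ∈ range N, ‖(cesK (β - α) j : ℂ) * weylDiff β f (j + n)‖ := by
          apply mul_le_mul_of_nonneg_left _ (cesK_pos (by linarith) n).le
          exact norm_sum_le _ _
      _ = ∑ j ∈ range N, cesK (α + 1) n * (cesK (β - α) j * ‖weylDiff β f (n + j)‖) := by
          rw [Finset.mul_sum]
          refine Finset.sum_congr rfl fun j _ => ?_
          rw [norm_mul, Complex.norm_real, Real.norm_eq_abs, abs_of_pos (cesK_pos hba j),
            show j + n = n + j by omega]
  calc ∑ n ∈ range N, cesK (α + 1) n * ‖weylDiff α f n‖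
      ≤ ∑ n ∈ range N, ∑ j ∈ range N,
          cesK (α + 1) n * (cesK (β - α) j * ‖weylDiff β f (n + j)‖) :=
        Finset.sum_le_sum step1
    _ = ∑ m ∈ range N, ∑ p ∈ Finset.HasAntidiagonal.antidiagonal m,
          cesK (α + 1) p.1 * (cesK (β - α) p.2 * ‖weylDiff β f (p.1 + p.2)‖) := by
        apply double_sum_eq N
          (fun x y => cesK (α + 1) x * (cesK (β - α) y * ‖weylDiff β f (x + y)‖))
        intro x y hxy
        simp [hvbβ (x + y) hxy]
    _ = ∑ m ∈ range N, cesK (β + 1) m * ‖weylDiff β f m‖ := by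
        refine Finset.sum_congr rfl fun m hm => ?_
        have e : ∀ p ∈ Finset.HasAntidiagonal.antidiagonal m,
            cesK (α + 1) p.1 * (cesK (β - α) p.2 * ‖weylDiff β f (p.1 + p.2)‖)
              = cesK (α + 1) p.1 * cesK (β - α) p.2 * ‖weylDiff β f m‖ := by
          intro p hp
          rw [Finset.HasAntidiagonal.mem_antidiagonal.mp hp]
          ring
        rw [Finset.sum_congr rfl e, ← Finset.sum_mul,
          cesK_vandermonde (by linarith : (0:ℝ) < α + 1) hba m,
          show α + 1 + (β - α) = β + 1 by ring]
end
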